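/- Let x_1,…,x_M ∈ R be sample points with empirical measure μ_n = M^{−1}Σ_i δ_{x_i}, let [a,b) ⊂ R be a finite interval, and for j ≥ 0 let I_{j,γ}, γ = 0,…,2^j−1, be the dyadic partition of [a,b) into intervals of length (b−a)2^{−j}. Assume μ_n(I_{j,γ}) > 0 for all cells up to resolution j+1 under consideration, and define φ_{j,γ} = μ_n(I_{j,γ})^{−1/2}·1{I_{j,γ}} and ψ_{j,γ} = μ_n(I_{j,γ})^{−1/2}·( μ_n(I_{j+1,2γ+1})^{1/2}·φ_{j+1,2γ} − μ_n(I_{j+1,2γ})^{1/2}·φ_{j+1,2γ+1} ). Then: (i) for each fixed j, the functions {φ_{j,γ} : γ} are orthonormal in L²(μ_n); (ii) the family {ψ_{j,γ}} is orthonormal in L²(μ_n) (across all resolutions j and shifts γ); and (iii) each ψ_{j,γ} is balanced with respect to μ_n, i.e. ∫_R ψ_{j,γ} dμ_n = 0. -/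

import Mathlib

open MeasureTheory

noncomputable section

/-- Empirical measure `μ_n(A) = M⁻¹ #{i : x_i ∈ A}` of the sample points `x_1,…,x_M`. -/
def empMeasOf {M : ℕ} (x : Fin M → ℝ) (A : Set ℝ) : ℝ :=
  (M : ℝ)⁻¹ * ∑ i, Set.indicator A (fun _ => (1 : ℝ)) (x i)

/-- Empirical inner product `⟨f,g⟩_n = ∫ f g dμ_n`. -/
def empInner1 {M : ℕ} (x : Fin M → ℝ) (f g : ℝ → ℝ) : ℝ :=
  (M : ℝ)⁻¹ * ∑ i, f (x i) * g (x i)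

/-- The dyadic subinterval `I_{j,γ} = [a + (b−a)2^{−j}γ, a + (b−a)2^{−j}(γ+1))` of `[a,b)`. -/
def dyadCell (a b : ℝ) (j γ : ℕ) : Set ℝ :=
  Set.Ico (a + (b - a) * (2 : ℝ)⁻¹ ^ j * γ) (a + (b - a) * (2 : ℝ)⁻¹ ^ j * (γ + 1))

/-- Design-adapted father wavelet `φ_{j,γ} = μ_n(I_{j,γ})^{−1/2} 1{I_{j,γ}}`. -/
def father {M : ℕ} (x : Fin M → ℝ) (a b : ℝ) (j γ : ℕ) : ℝ → ℝ := fun t =>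
  (Real.sqrt (empMeasOf x (dyadCell a b j γ)))⁻¹ *
    Set.indicator (dyadCell a b j γ) (fun _ => (1 : ℝ)) t

/-- Design-adapted mother wavelet
`ψ_{j,γ} = μ_n(I_{j,γ})^{−1/2} ( μ_n(I_{j+1,2γ+1})^{1/2} φ_{j+1,2γ} − μ_n(I_{j+1,2γ})^{1/2} φ_{j+1,2γ+1} )`. -/
def mother {M : ℕ} (x : Fin M → ℝ) (a b : ℝ) (j γ : ℕ) : ℝ → ℝ := fun t =>
  (Real.sqrt (empMeasOf x (dyadCell a b j γ)))⁻¹ *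
    (Real.sqrt (empMeasOf x (dyadCell a b (j + 1) (2 * γ + 1))) * father x a b (j + 1) (2 * γ) t -
      Real.sqrt (empMeasOf x (dyadCell a b (j + 1) (2 * γ))) * father x a b (j + 1) (2 * γ + 1) t)

/- ### Auxiliary lemmas -/

lemma dyadCell_disjoint (a b : ℝ) (hab : a < b) (j : ℕ) {γ γ' : ℕ} (h : γ ≠ γ') :
    dyadCell a b j γ ∩ dyadCell a b j γ' = ∅ := by
  have hc : (0:ℝ) < (b - a) * (2:ℝ)⁻¹ ^ j := by
    have : (0:ℝ) < b - a := by linarith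
    positivity
  rw [dyadCell, dyadCell, Set.Ico_inter_Ico]
  apply Set.Ico_eq_empty
  rw [not_lt]
  rcases lt_or_gt_of_ne h with hlt | hlt
  · have hle : (γ:ℝ) + 1 ≤ (γ':ℝ) := by exact_mod_cast hlt
    calc min (a + (b - a) * (2:ℝ)⁻¹ ^ j * (γ + 1)) (a + (b - a) * (2:ℝ)⁻¹ ^ j * (γ' + 1))
        ≤ a + (b - a) * (2:ℝ)⁻¹ ^ j * (γ + 1) := min_le_left _ _
      _ ≤ a + (b - a) * (2:ℝ)⁻¹ ^ j * γ' := by nlinarith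
      _ ≤ max (a + (b - a) * (2:ℝ)⁻¹ ^ j * γ) (a + (b - a) * (2:ℝ)⁻¹ ^ j * γ') := le_max_right _ _
  · have hle : (γ':ℝ) + 1 ≤ (γ:ℝ) := by exact_mod_cast hlt
    calc min (a + (b - a) * (2:ℝ)⁻¹ ^ j * (γ + 1)) (a + (b - a) * (2:ℝ)⁻¹ ^ j * (γ' + 1))
        ≤ a + (b - a) * (2:ℝ)⁻¹ ^ j * (γ' + 1) := min_le_right _ _
      _ ≤ a + (b - a) * (2:ℝ)⁻¹ ^ j * γ := by nlinarith
      _ ≤ max (a + (b - a) * (2:ℝ)⁻¹ ^ j * γ) (a + (b - a) * (2:ℝ)⁻¹ ^ j * γ') := le_max_left _ _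

lemma dyadCell_split (a b : ℝ) (hab : a < b) (j γ : ℕ) :
    dyadCell a b j γ = dyadCell a b (j+1) (2*γ) ∪ dyadCell a b (j+1) (2*γ+1) := by
  have hc : (0:ℝ) ≤ (b - a) * (2:ℝ)⁻¹ ^ (j+1) := by
    have : (0:ℝ) < b - a := by linarith
    positivity
  have e1 : a + (b - a) * (2:ℝ)⁻¹ ^ j * γ
      = a + (b - a) * (2:ℝ)⁻¹ ^ (j+1) * ((2*γ : ℕ) : ℝ) := by push_cast; ring
  have e2 : a + (b - a) * (2:ℝ)⁻¹ ^ j * (γ + 1)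
      = a + (b - a) * (2:ℝ)⁻¹ ^ (j+1) * (((2*γ+1 : ℕ) : ℝ) + 1) := by push_cast; ring
  have e3 : a + (b - a) * (2:ℝ)⁻¹ ^ (j+1) * (((2*γ : ℕ) : ℝ) + 1)
      = a + (b - a) * (2:ℝ)⁻¹ ^ (j+1) * ((2*γ+1 : ℕ) : ℝ) := by push_cast; ring
  rw [dyadCell, dyadCell, dyadCell, e1, e2, e3]
  refine (Set.Ico_union_Ico_eq_Ico ?_ ?_).symm
  · push_cast; nlinarith
  · push_cast; nlinarith

lemma dyadCell_succ_subset (a b : ℝ) (hab : a < b) (j γ : ℕ) :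
    dyadCell a b (j+1) γ ⊆ dyadCell a b j (γ/2) := by
  rw [dyadCell_split a b hab j (γ/2)]
  have h : γ = 2*(γ/2) ∨ γ = 2*(γ/2)+1 := by omega
  rcases h with h | h
  · conv_lhs => rw [h]
    exact Set.subset_union_left
  · conv_lhs => rw [h]
    exact Set.subset_union_right

lemma dyadCell_subset_pow (a b : ℝ) (hab : a < b) (j k γ : ℕ) :
    dyadCell a b (j+k) γ ⊆ dyadCell a b j (γ / 2^k) := by
  induction k generalizing γ with
  | zero => simp
  | succ k ih =>
      have h1 : dyadCell a b (j+k+1) γ ⊆ dyadCell a b (j+k) (γ/2) :=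
        dyadCell_succ_subset a b hab (j+k) γ
      have h2 := ih (γ/2)
      have h3 : γ / 2 / 2^k = γ / 2^(k+1) := by
        rw [Nat.div_div_eq_div_mul, pow_succ']
      rw [show j + (k+1) = j + k + 1 by omega]
      exact h3 ▸ (h1.trans h2)

section X
variable {M : ℕ} (x : Fin M → ℝ)

lemma empMeasOf_union (A B : Set ℝ) (h : A ∩ B = ∅) :
    empMeasOf x (A ∪ B) = empMeasOf x A + empMeasOf x B := by
  unfold empMeasOf
  rw [← mul_add, ← Finset.sum_add_distrib]
  congr 1
  apply Finset.sum_congr rfl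
  intro i _
  by_cases hA : x i ∈ A
  · have hB : x i ∉ B := fun hB => by
      have : x i ∈ A ∩ B := ⟨hA, hB⟩
      simp [h] at this
    simp [Set.indicator_apply, hA, hB]
  · by_cases hB : x i ∈ B <;> simp [Set.indicator_apply, hA, hB]

lemma empInner1_comm (f g : ℝ → ℝ) : empInner1 x f g = empInner1 x g f := by
  unfold empInner1
  congr 1
  exact Finset.sum_congr rfl fun i _ => mul_comm _ _

lemma empInner1_indicator (A B : Set ℝ) :
    empInner1 x (fun t => Set.indicator A (fun _ => (1:ℝ)) t)
      (fun t => Set.indicator B (fun _ => (1:ℝ)) t) = empMeasOf x (A ∩ B) := by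
  unfold empInner1 empMeasOf
  congr 1
  apply Finset.sum_congr rfl
  intro i _
  by_cases hA : x i ∈ A <;> by_cases hB : x i ∈ B <;>
    simp [Set.indicator_apply, hA, hB]

lemma empInner1_smul (c d : ℝ) (f g : ℝ → ℝ) :
    empInner1 x (fun t => c * f t) (fun t => d * g t) = c * d * empInner1 x f g := by
  unfold empInner1
  have key : (∑ i, (c * f (x i)) * (d * g (x i))) = c * d * ∑ i, f (x i) * g (x i) := by
    rw [Finset.mul_sum]
    exact Finset.sum_congr rfl fun i _ => by ring
  simp only at key ⊢
  rw [key]; ring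

lemma empInner1_comb (c1 c2 d1 d2 : ℝ) (f1 f2 g1 g2 : ℝ → ℝ) :
    empInner1 x (fun t => c1 * f1 t + c2 * f2 t) (fun t => d1 * g1 t + d2 * g2 t)
      = c1*d1 * empInner1 x f1 g1 + c1*d2 * empInner1 x f1 g2
        + c2*d1 * empInner1 x f2 g1 + c2*d2 * empInner1 x f2 g2 := by
  unfold empInner1
  have key : (∑ i, (c1 * f1 (x i) + c2 * f2 (x i)) * (d1 * g1 (x i) + d2 * g2 (x i)))
      = c1*d1 * ∑ i, f1 (x i) * g1 (x i) + c1*d2 * ∑ i, f1 (x i) * g2 (x i)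
        + c2*d1 * ∑ i, f2 (x i) * g1 (x i) + c2*d2 * ∑ i, f2 (x i) * g2 (x i) := by
    rw [Finset.mul_sum, Finset.mul_sum, Finset.mul_sum, Finset.mul_sum,
      ← Finset.sum_add_distrib, ← Finset.sum_add_distrib, ← Finset.sum_add_distrib]
    exact Finset.sum_congr rfl fun i _ => by ring
  simp only at key ⊢
  rw [key]; ring

lemma empInner1_father (a b : ℝ) (hab : a < b) (j : ℕ) (γ γ' : ℕ)
    (hγ : 0 < empMeasOf x (dyadCell a b j γ)) :
    empInner1 x (father x a b j γ) (father x a b j γ') = if γ = γ' then 1 else 0 := by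
  have hre : empInner1 x (father x a b j γ) (father x a b j γ')
      = (Real.sqrt (empMeasOf x (dyadCell a b j γ)))⁻¹
        * (Real.sqrt (empMeasOf x (dyadCell a b j γ')))⁻¹
        * empMeasOf x (dyadCell a b j γ ∩ dyadCell a b j γ') := by
    rw [show father x a b j γ = fun t => (Real.sqrt (empMeasOf x (dyadCell a b j γ)))⁻¹ *
          Set.indicator (dyadCell a b j γ) (fun _ => (1:ℝ)) t from rfl,
        show father x a b j γ' = fun t => (Real.sqrt (empMeasOf x (dyadCell a b j γ')))⁻¹ *
          Set.indicator (dyadCell a b j γ') (fun _ => (1:ℝ)) t from rfl,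
        empInner1_smul, empInner1_indicator]
  rw [hre]
  by_cases h : γ = γ'
  · subst h
    rw [Set.inter_self, if_pos rfl]
    have hne : Real.sqrt (empMeasOf x (dyadCell a b j γ)) ≠ 0 :=
      ne_of_gt (Real.sqrt_pos.mpr hγ)
    rw [← Real.mul_self_sqrt hγ.le]
    field_simp
    rw [Real.sqrt_sq (Real.sqrt_nonneg _)]
  · rw [dyadCell_disjoint a b hab j h, if_neg h]
    simp [empMeasOf]

lemma sum_father (a b : ℝ) (j γ : ℕ) (hγ : 0 < empMeasOf x (dyadCell a b j γ)) :
    (M:ℝ)⁻¹ * ∑ i, father x a b j γ (x i) = Real.sqrt (empMeasOf x (dyadCell a b j γ)) := by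
  have hne : Real.sqrt (empMeasOf x (dyadCell a b j γ)) ≠ 0 :=
    ne_of_gt (Real.sqrt_pos.mpr hγ)
  unfold father
  rw [← Finset.mul_sum]
  have h1 : (M:ℝ)⁻¹ * ((Real.sqrt (empMeasOf x (dyadCell a b j γ)))⁻¹ *
      ∑ i, Set.indicator (dyadCell a b j γ) (fun _ => (1:ℝ)) (x i))
      = (Real.sqrt (empMeasOf x (dyadCell a b j γ)))⁻¹ * empMeasOf x (dyadCell a b j γ) := by
    rw [empMeasOf]; ring
  rw [h1, inv_mul_eq_div, div_eq_iff hne]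
  exact (Real.mul_self_sqrt hγ.le).symm

lemma mother_support (a b : ℝ) (hab : a < b) (j γ : ℕ) {t : ℝ}
    (ht : t ∉ dyadCell a b j γ) : mother x a b j γ t = 0 := by
  have hL : t ∉ dyadCell a b (j+1) (2*γ) := fun h =>
    ht (by rw [dyadCell_split a b hab j γ]; exact Or.inl h)
  have hR : t ∉ dyadCell a b (j+1) (2*γ+1) := fun h =>
    ht (by rw [dyadCell_split a b hab j γ]; exact Or.inr h)
  simp [mother, father, Set.indicator_of_notMem hL, Set.indicator_of_notMem hR]

lemma mother_const (a b : ℝ) (hab : a < b) (j γ δ : ℕ) :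
    ∃ c : ℝ, ∀ t ∈ dyadCell a b (j+1) δ, mother x a b j γ t = c := by
  by_cases h1 : δ = 2*γ
  · subst h1
    refine ⟨(Real.sqrt (empMeasOf x (dyadCell a b j γ)))⁻¹ *
      (Real.sqrt (empMeasOf x (dyadCell a b (j+1) (2*γ+1))) *
        (Real.sqrt (empMeasOf x (dyadCell a b (j+1) (2*γ))))⁻¹), fun t ht => ?_⟩
    have hout : t ∉ dyadCell a b (j+1) (2*γ+1) := fun h => by
      have hd := dyadCell_disjoint a b hab (j+1) (show 2*γ ≠ 2*γ+1 by omega)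
      have : t ∈ dyadCell a b (j+1) (2*γ) ∩ dyadCell a b (j+1) (2*γ+1) := ⟨ht, h⟩
      simp [hd] at this
    simp only [mother, father, Set.indicator_of_mem ht, Set.indicator_of_notMem hout]
    ring
  by_cases h2 : δ = 2*γ+1
  · subst h2
    refine ⟨-((Real.sqrt (empMeasOf x (dyadCell a b j γ)))⁻¹ *
      (Real.sqrt (empMeasOf x (dyadCell a b (j+1) (2*γ))) *
        (Real.sqrt (empMeasOf x (dyadCell a b (j+1) (2*γ+1))))⁻¹)), fun t ht => ?_⟩
    have hout : t ∉ dyadCell a b (j+1) (2*γ) := fun h => by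
      have hd := dyadCell_disjoint a b hab (j+1) (show 2*γ+1 ≠ 2*γ by omega)
      have : t ∈ dyadCell a b (j+1) (2*γ+1) ∩ dyadCell a b (j+1) (2*γ) := ⟨ht, h⟩
      simp [hd] at this
    simp only [mother, father, Set.indicator_of_mem ht, Set.indicator_of_notMem hout]
    ring
  · refine ⟨0, fun t ht => ?_⟩
    have houtL : t ∉ dyadCell a b (j+1) (2*γ) := fun h => by
      have hd := dyadCell_disjoint a b hab (j+1) (show δ ≠ 2*γ from h1)
      have : t ∈ dyadCell a b (j+1) δ ∩ dyadCell a b (j+1) (2*γ) := ⟨ht, h⟩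
      simp [hd] at this
    have houtR : t ∉ dyadCell a b (j+1) (2*γ+1) := fun h => by
      have hd := dyadCell_disjoint a b hab (j+1) (show δ ≠ 2*γ+1 from h2)
      have : t ∈ dyadCell a b (j+1) δ ∩ dyadCell a b (j+1) (2*γ+1) := ⟨ht, h⟩
      simp [hd] at this
    simp [mother, father, Set.indicator_of_notMem houtL, Set.indicator_of_notMem houtR]

lemma mother_balanced (a b : ℝ) (j γ : ℕ)
    (hL : 0 < empMeasOf x (dyadCell a b (j+1) (2*γ)))
    (hR : 0 < empMeasOf x (dyadCell a b (j+1) (2*γ+1))) :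
    (M:ℝ)⁻¹ * ∑ i, mother x a b j γ (x i) = 0 := by
  have hsum : (∑ i, mother x a b j γ (x i))
      = ((Real.sqrt (empMeasOf x (dyadCell a b j γ)))⁻¹
            * Real.sqrt (empMeasOf x (dyadCell a b (j+1) (2*γ+1))))
          * (∑ i, father x a b (j+1) (2*γ) (x i))
        - ((Real.sqrt (empMeasOf x (dyadCell a b j γ)))⁻¹
            * Real.sqrt (empMeasOf x (dyadCell a b (j+1) (2*γ))))
          * (∑ i, father x a b (j+1) (2*γ+1) (x i)) := by
    rw [Finset.mul_sum, Finset.mul_sum, ← Finset.sum_sub_distrib]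
    exact Finset.sum_congr rfl fun i _ => by simp only [mother]; ring
  have key : (M:ℝ)⁻¹ * ∑ i, mother x a b j γ (x i)
      = ((Real.sqrt (empMeasOf x (dyadCell a b j γ)))⁻¹
            * Real.sqrt (empMeasOf x (dyadCell a b (j+1) (2*γ+1))))
          * ((M:ℝ)⁻¹ * ∑ i, father x a b (j+1) (2*γ) (x i))
        - ((Real.sqrt (empMeasOf x (dyadCell a b j γ)))⁻¹
            * Real.sqrt (empMeasOf x (dyadCell a b (j+1) (2*γ))))
          * ((M:ℝ)⁻¹ * ∑ i, father x a b (j+1) (2*γ+1) (x i)) := by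
    rw [hsum]; ring
  rw [key, sum_father x a b (j+1) (2*γ) hL, sum_father x a b (j+1) (2*γ+1) hR]
  ring

/-- Cross-resolution orthogonality: `j < j'`. -/
lemma mother_cross (a b : ℝ) (hab : a < b) (j γ j' γ' : ℕ) (hjj' : j < j')
    (hL' : 0 < empMeasOf x (dyadCell a b (j'+1) (2*γ')))
    (hR' : 0 < empMeasOf x (dyadCell a b (j'+1) (2*γ'+1))) :
    empInner1 x (mother x a b j γ) (mother x a b j' γ') = 0 := by
  set k := j' - (j+1) with hk
  have hj' : j' = (j+1) + k := by omega
  obtain ⟨c, hc⟩ := mother_const x a b hab j γ (γ' / 2^k)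
  have hsub : dyadCell a b j' γ' ⊆ dyadCell a b (j+1) (γ' / 2^k) := by
    rw [hj']; exact dyadCell_subset_pow a b hab (j+1) k γ'
  have hzero := mother_balanced x a b j' γ' hL' hR'
  have hterm : ∀ i, mother x a b j γ (x i) * mother x a b j' γ' (x i)
      = c * mother x a b j' γ' (x i) := fun i => by
    by_cases h : x i ∈ dyadCell a b j' γ'
    · rw [hc _ (hsub h)]
    · rw [mother_support x a b hab j' γ' h, mul_zero, mul_zero]
  unfold empInner1
  rw [Finset.sum_congr rfl fun i _ => hterm i, ← Finset.mul_sum,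
    show (M:ℝ)⁻¹ * (c * ∑ i, mother x a b j' γ' (x i))
      = c * ((M:ℝ)⁻¹ * ∑ i, mother x a b j' γ' (x i)) from by ring,
    hzero, mul_zero]

end X

/-- The design-adapted one-dimensional Haar wavelets are orthonormal in `L²(μ_n)` and the
mother wavelets are balanced with respect to the empirical measure `μ_n`. -/
theorem design_adapted_wavelets_orthonormal_balanced
    {M : ℕ} (hM : 0 < M) (x : Fin M → ℝ) (a b : ℝ) (hab : a < b) (jmax : ℕ)
    (hpos : ∀ j ≤ jmax + 1, ∀ γ < 2 ^ j, 0 < empMeasOf x (dyadCell a b j γ)) :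
    -- (i) for each fixed resolution `j`, the father wavelets `φ_{j,γ}` are orthonormal
    (∀ j ≤ jmax + 1, ∀ γ < 2 ^ j, ∀ γ' < 2 ^ j,
      empInner1 x (father x a b j γ) (father x a b j γ') = if γ = γ' then 1 else 0) ∧
    -- (ii) the mother wavelets `ψ_{j,γ}` are orthonormal across all resolutions and shifts
    (∀ j ≤ jmax, ∀ γ < 2 ^ j, ∀ j' ≤ jmax, ∀ γ' < 2 ^ j',
      empInner1 x (mother x a b j γ) (mother x a b j' γ') =
        if j = j' ∧ γ = γ' then 1 else 0) ∧
    -- (iii) each `ψ_{j,γ}` is balanced w.r.t. `μ_n`: `∫ ψ_{j,γ} dμ_n = 0`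
    (∀ j ≤ jmax, ∀ γ < 2 ^ j, (M : ℝ)⁻¹ * ∑ i, mother x a b j γ (x i) = 0) := by
  have hchild : ∀ j ≤ jmax, ∀ γ < 2^j,
      0 < empMeasOf x (dyadCell a b (j+1) (2*γ)) ∧
      0 < empMeasOf x (dyadCell a b (j+1) (2*γ+1)) := by
    intro j hj γ hγ
    have h2 : 2^(j+1) = 2 * 2^j := by ring
    exact ⟨hpos (j+1) (by omega) (2*γ) (by omega),
      hpos (j+1) (by omega) (2*γ+1) (by omega)⟩
  refine ⟨?_, ?_, ?_⟩
  · intro j hj γ hγ γ' hγ'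
    exact empInner1_father x a b hab j γ γ' (hpos j (by omega) γ hγ)
  · intro j hj γ hγ j' hj' γ' hγ'
    rcases lt_trichotomy j j' with hlt | heq | hgt
    · obtain ⟨hL', hR'⟩ := hchild j' hj' γ' hγ'
      rw [mother_cross x a b hab j γ j' γ' hlt hL' hR', if_neg (fun h => by omega)]
    · subst heq
      by_cases hγγ : γ = γ'
      · subst hγγ
        rw [if_pos ⟨rfl, rfl⟩]
        obtain ⟨hL, hR⟩ := hchild j hj γ hγ
        have hI : 0 < empMeasOf x (dyadCell a b j γ) := hpos j (by omega) γ hγ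
        set μI := empMeasOf x (dyadCell a b j γ) with hμI
        set μL := empMeasOf x (dyadCell a b (j+1) (2*γ)) with hμL
        set μR := empMeasOf x (dyadCell a b (j+1) (2*γ+1)) with hμR
        have hIsum : μI = μL + μR := by
          rw [hμI, dyadCell_split a b hab j γ,
            empMeasOf_union x _ _ (dyadCell_disjoint a b hab (j+1) (by omega))]
        have hm : mother x a b j γ = fun t =>
            ((Real.sqrt μI)⁻¹ * Real.sqrt μR) * father x a b (j+1) (2*γ) t
              + (-((Real.sqrt μI)⁻¹ * Real.sqrt μL)) * father x a b (j+1) (2*γ+1) t :=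
          funext fun t => by simp only [mother]; ring
        rw [hm, empInner1_comb,
          empInner1_father x a b hab (j+1) (2*γ) (2*γ) hL,
          empInner1_father x a b hab (j+1) (2*γ) (2*γ+1) hL,
          empInner1_father x a b hab (j+1) (2*γ+1) (2*γ) hR,
          empInner1_father x a b hab (j+1) (2*γ+1) (2*γ+1) hR,
          if_pos rfl, if_pos rfl, if_neg (by omega), if_neg (by omega)]
        have hssI : Real.sqrt μI * Real.sqrt μI = μI := Real.mul_self_sqrt hI.le
        have hssL : Real.sqrt μL * Real.sqrt μL = μL := Real.mul_self_sqrt hL.le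
        have hssR : Real.sqrt μR * Real.sqrt μR = μR := Real.mul_self_sqrt hR.le
        have hne : Real.sqrt μI ≠ 0 := ne_of_gt (Real.sqrt_pos.mpr hI)
        field_simp
        nlinarith [hssI, hssL, hssR]
      · rw [if_neg (fun h => hγγ h.2)]
        have hterm : ∀ i, mother x a b j γ (x i) * mother x a b j γ' (x i) = 0 := fun i => by
          by_cases h : x i ∈ dyadCell a b j γ
          · have h2 : x i ∉ dyadCell a b j γ' := fun h' => by
              have : x i ∈ dyadCell a b j γ ∩ dyadCell a b j γ' := ⟨h, h'⟩
              simp [dyadCell_disjoint a b hab j hγγ] at this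
            rw [mother_support x a b hab j γ' h2, mul_zero]
          · rw [mother_support x a b hab j γ h, zero_mul]
        unfold empInner1
        rw [Finset.sum_congr rfl fun i _ => hterm i, Finset.sum_const_zero, mul_zero]
    · obtain ⟨hL, hR⟩ := hchild j hj γ hγ
      rw [empInner1_comm, mother_cross x a b hab j' γ' j γ hgt hL hR,
        if_neg (fun h => by omega)]
  · intro j hj γ hγ
    obtain ⟨hL, hR⟩ := hchild j hj γ hγ
    exact mother_balanced x a b j γ hL hR
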